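/- Let Γ be a finitely generated group with finite symmetric generating set Q. (a) If Z is a uniformly recurrent subgroup of Γ and H ∈ Z, then for every x ∈ Γ/H and every R > 0 there exists S > 0 such that for every y ∈ Γ/H there is z ∈ Γ/H with d(y,z) ≤ S and the rooted-labeled R-balls around x and around z isomorphic. (b) Conversely, if a subgroup H ≤ Γ has this repetition property (for every x ∈ Γ/H and R > 0 there is S > 0 such that every S-ball in Γ/H contains a point z whose rooted-labeled R-ball is isomorphic to that of x), then the closure of the conjugation orbit {gHg⁻¹ : g ∈ Γ} in Sub(Γ) is a uniformly recurrent subgroup. -/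

import Mathlib

/-- Conjugation action of a group on its subgroups: `g • H = gHg⁻¹`. -/
def conjSub {Γ : Type*} [Group Γ] (g : Γ) (H : Subgroup Γ) : Subgroup Γ :=
  Subgroup.map (MulAut.conj g).toMonoidHom H

/-- The Chabauty-type topology on `Sub(Γ)`: the topology induced from the product
topology on `{0,1}^Γ` via `H ↦ (γ ↦ decide (γ ∈ H))`. -/
noncomputable instance chabauty {Γ : Type*} [Group Γ] : TopologicalSpace (Subgroup Γ) :=
  TopologicalSpace.induced
    (fun H (g : Γ) => @decide (g ∈ H) (Classical.dec _)) inferInstance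

/-- A uniformly recurrent subgroup: a nonempty, closed, conjugation-invariant subset of
`Sub(Γ)` on which every conjugation orbit is dense. -/
structure IsURS {Γ : Type*} [Group Γ] (Z : Set (Subgroup Γ)) : Prop where
  nonempty : Z.Nonempty
  closed : IsClosed Z
  invariant : ∀ g : Γ, ∀ H ∈ Z, conjSub g H ∈ Z
  minimal : ∀ H ∈ Z, ∀ K ∈ Z, K ∈ closure {L : Subgroup Γ | ∃ g : Γ, conjSub g H = L}

/-- The Schreier graph of a subgroup `H ≤ Γ` with respect to a generating set `Q`:
vertices are left cosets in `Γ/H`, and `x ~ y` iff some `s ∈ Q` moves one to the other. -/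
def schreierGraph {Γ : Type*} [Group Γ] (Q : Finset Γ) (H : Subgroup Γ) :
    SimpleGraph (Γ ⧸ H) where
  Adj x y := x ≠ y ∧ ∃ s ∈ Q, s • x = y ∨ s • y = x
  symm := by
    constructor
    rintro x y ⟨hne, s, hs, h⟩
    exact ⟨hne.symm, s, hs, h.symm⟩
  loopless := by constructor; rintro x ⟨hne, _⟩; exact hne rfl

/-- The `R`-ball around `x` in the Schreier graph of `H`. -/
def sBall {Γ : Type*} [Group Γ] (Q : Finset Γ) (H : Subgroup Γ) (R : ℕ) (x : Γ ⧸ H) :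
    Set (Γ ⧸ H) :=
  {y | (schreierGraph Q H).Reachable x y ∧ (schreierGraph Q H).dist x y ≤ R}

/-- The rooted-labeled `R`-balls around `x ∈ Γ/H` and `y ∈ Γ/H'` are isomorphic:
there is a root-preserving bijection between them commuting with all generator labels. -/
def BallIso {Γ : Type*} [Group Γ] (Q : Finset Γ) (H H' : Subgroup Γ) (R : ℕ)
    (x : Γ ⧸ H) (y : Γ ⧸ H') : Prop :=
  ∃ φ : (Γ ⧸ H) → (Γ ⧸ H'),
    Set.BijOn φ (sBall Q H R x) (sBall Q H' R y) ∧ φ x = y ∧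
    ∀ s ∈ Q, ∀ u ∈ sBall Q H R x, ∀ v ∈ sBall Q H R x, (s • u = v ↔ s • φ u = φ v)

/-- The repetition property of a subgroup `H`: every pattern (`R`-ball) occurring around
some `x ∈ Γ/H` occurs within uniformly bounded distance of every vertex of `Γ/H`. -/
def RepetitionProperty {Γ : Type*} [Group Γ] (Q : Finset Γ) (H : Subgroup Γ) : Prop :=
  ∀ x : Γ ⧸ H, ∀ R : ℕ, 0 < R → ∃ S : ℕ, 0 < S ∧
    ∀ y : Γ ⧸ H, ∃ z ∈ sBall Q H S y, BallIso Q H H R x z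


section WB
variable {Γ : Type*} [Group Γ] (Q : Finset Γ)

/-- The word ball: elements expressible as products of ≤ n generators. -/
def WB (n : ℕ) : Set Γ :=
  {g | ∃ l : List Γ, (∀ s ∈ l, s ∈ Q) ∧ l.length ≤ n ∧ l.prod = g}

variable {Q}

lemma one_mem_WB (n : ℕ) : (1 : Γ) ∈ WB Q n :=
  ⟨[], by simp, by simp, by simp⟩

lemma WB_mono {m n : ℕ} (h : m ≤ n) : WB Q m ⊆ WB (Γ := Γ) Q n := by
  rintro g ⟨l, hl, hlen, hprod⟩
  exact ⟨l, hl, hlen.trans h, hprod⟩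

lemma mul_mem_WB {m n : ℕ} {a b : Γ} (ha : a ∈ WB Q m) (hb : b ∈ WB Q n) :
    a * b ∈ WB Q (m + n) := by
  obtain ⟨l, hl, hlen, rfl⟩ := ha
  obtain ⟨l', hl', hlen', rfl⟩ := hb
  exact ⟨l ++ l', by simp_all +contextual [or_imp], by simp; omega, by simp⟩

lemma inv_mem_WB (hsym : ∀ s ∈ Q, s⁻¹ ∈ Q) {n : ℕ} {a : Γ} (ha : a ∈ WB Q n) :
    a⁻¹ ∈ WB Q n := by
  obtain ⟨l, hl, hlen, rfl⟩ := ha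
  refine ⟨(l.map Inv.inv).reverse, ?_, by simp [hlen], (List.prod_inv_reverse l).symm⟩
  simp only [List.mem_reverse, List.mem_map]
  rintro s ⟨t, ht, rfl⟩
  exact hsym t (hl t ht)

lemma mem_WB_of_mem {s : Γ} (hs : s ∈ Q) {n : ℕ} (hn : 1 ≤ n) : s ∈ WB Q n :=
  ⟨[s], by simpa, by simpa, by simp⟩

lemma WB_finite (n : ℕ) : (WB (Γ := Γ) Q n).Finite := by
  induction n with
  | zero =>
    refine Set.Finite.subset (Set.finite_singleton 1) ?_
    rintro g ⟨l, hl, hlen, rfl⟩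
    simp at hlen
    simp [hlen]
  | succ n ih =>
    refine Set.Finite.subset (((Q.finite_toSet.biUnion
      (fun s _ => ih.image (fun t => s * t))).insert 1)) ?_
    rintro g ⟨l, hl, hlen, rfl⟩
    cases l with
    | nil => simp
    | cons s t =>
      refine Set.mem_insert_iff.mpr (Or.inr ?_)
      refine Set.mem_biUnion (hl s (by simp)) ?_
      exact ⟨t.prod, ⟨t, fun x hx => hl x (by simp [hx]), by simpa using hlen, rfl⟩, by simp⟩

/-- Every group element is a word in a symmetric generating set. -/
lemma exists_word (hgen : Subgroup.closure (Q : Set Γ) = ⊤)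
    (hsym : ∀ s ∈ Q, s⁻¹ ∈ Q) (g : Γ) :
    ∃ n : ℕ, g ∈ WB Q n := by
  have hg : g ∈ Subgroup.closure (Q : Set Γ) := hgen ▸ Subgroup.mem_top g
  induction hg using Subgroup.closure_induction with
  | mem s hs => exact ⟨1, mem_WB_of_mem hs le_rfl⟩
  | one => exact ⟨0, one_mem_WB 0⟩
  | mul a b _ _ iha ihb =>
    obtain ⟨m, hm⟩ := iha; obtain ⟨n, hn⟩ := ihb
    exact ⟨m + n, mul_mem_WB hm hn⟩
  | inv a _ iha =>
    obtain ⟨m, hm⟩ := iha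
    exact ⟨m, inv_mem_WB hsym hm⟩

end WB

section Conj
variable {Γ : Type*} [Group Γ]

lemma mem_conjSub {g w : Γ} {K : Subgroup Γ} :
    w ∈ conjSub g K ↔ g⁻¹ * w * g ∈ K := by
  simp only [conjSub, Subgroup.mem_map, MulEquiv.coe_toMonoidHom, MulAut.conj_apply]
  constructor
  · rintro ⟨h, hh, rfl⟩
    simpa [mul_assoc] using hh
  · intro h
    exact ⟨g⁻¹ * w * g, h, by group⟩

lemma conjSub_one (K : Subgroup Γ) : conjSub 1 K = K := by
  ext w; simp [mem_conjSub]

lemma conjSub_conjSub (g h : Γ) (K : Subgroup Γ) :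
    conjSub g (conjSub h K) = conjSub (g * h) K := by
  ext w; simp [mem_conjSub, mul_assoc]

lemma stabilizer_mk (H : Subgroup Γ) (a : Γ) :
    MulAction.stabilizer Γ (QuotientGroup.mk a : Γ ⧸ H) = conjSub a H := by
  ext w
  rw [MulAction.mem_stabilizer_iff, mem_conjSub]
  show ((w * a : Γ) : Γ ⧸ H) = (a : Γ ⧸ H) ↔ _
  rw [QuotientGroup.eq]
  constructor
  · intro h; simpa [mul_assoc] using H.inv_mem h
  · intro h; simpa [mul_assoc] using H.inv_mem h

lemma stabilizer_smul (g : Γ) {H : Subgroup Γ} (y : Γ ⧸ H) :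
    MulAction.stabilizer Γ (g • y) = conjSub g (MulAction.stabilizer Γ y) := by
  ext w
  rw [MulAction.mem_stabilizer_iff, mem_conjSub, MulAction.mem_stabilizer_iff]
  constructor
  · intro h
    have : (g⁻¹ * w * g) • y = g⁻¹ • (w • g • y) := by simp [mul_smul]
    rw [this, h, inv_smul_smul]
  · intro h
    have : w • g • y = g • ((g⁻¹ * w * g) • y) := by simp [mul_smul]
    rw [this, h]

lemma smul_eq_iff_mem_stabilizer {H : Subgroup Γ} {w : Γ} {y : Γ ⧸ H} :
    w • y = y ↔ w ∈ MulAction.stabilizer Γ y := Iff.rfl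

end Conj

section Ball
variable {Γ : Type*} [Group Γ] {Q : Finset Γ} {H H' : Subgroup Γ}

lemma exists_word_of_walk (hsym : ∀ s ∈ Q, s⁻¹ ∈ Q) {u v : Γ ⧸ H}
    (p : (schreierGraph Q H).Walk u v) : ∃ w ∈ WB Q p.length, w • u = v := by
  induction p with
  | nil => exact ⟨1, one_mem_WB 0, one_smul _ _⟩
  | @cons a b c hadj q ih =>
    obtain ⟨w, hw, hwv⟩ := ih
    obtain ⟨-, s, hs, hor⟩ := hadj
    rcases hor with h | h
    · refine ⟨w * s, ?_, by rw [mul_smul, h, hwv]⟩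
      show w * s ∈ WB Q (q.length + 1)
      simpa [Nat.add_comm] using mul_mem_WB hw (mem_WB_of_mem hs le_rfl)
    · have h' : s⁻¹ • a = b := by rw [inv_smul_eq_iff, h]
      refine ⟨w * s⁻¹, ?_, by rw [mul_smul, h', hwv]⟩
      show w * s⁻¹ ∈ WB Q (q.length + 1)
      simpa [Nat.add_comm] using mul_mem_WB hw (mem_WB_of_mem (hsym s hs) le_rfl)

lemma exists_walk_of_word {x : Γ ⧸ H} (l : List Γ) (hl : ∀ s ∈ l, s ∈ Q) :
    ∃ p : (schreierGraph Q H).Walk x (l.prod • x), p.length ≤ l.length := by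
  induction l with
  | nil =>
    rw [List.prod_nil, one_smul]
    exact ⟨SimpleGraph.Walk.nil, by simp⟩
  | cons s t ih =>
    obtain ⟨p, hp⟩ := ih (fun a ha => hl a (List.mem_cons_of_mem s ha))
    have hprod : (s :: t).prod • x = s • (t.prod • x) := by rw [List.prod_cons, mul_smul]
    by_cases h : s • (t.prod • x) = t.prod • x
    · rw [hprod, h]
      exact ⟨p, hp.trans (by simp)⟩
    · have hadj : (schreierGraph Q H).Adj (t.prod • x) ((s :: t).prod • x) := by
        rw [hprod]
        exact ⟨fun he => h he.symm, s, hl s (by simp), Or.inl rfl⟩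
      exact ⟨p.concat hadj, (p.length_concat hadj).trans_le (by simpa using Nat.add_le_add_right hp 1)⟩

lemma mem_sBall_iff (hsym : ∀ s ∈ Q, s⁻¹ ∈ Q) {R : ℕ} {x y : Γ ⧸ H} :
    y ∈ sBall Q H R x ↔ ∃ w ∈ WB Q R, w • x = y := by
  constructor
  · rintro ⟨hr, hd⟩
    obtain ⟨p, hp⟩ := hr.exists_walk_length_eq_dist
    obtain ⟨w, hw, hwy⟩ := exists_word_of_walk hsym p
    exact ⟨w, WB_mono (hp ▸ hd) hw, hwy⟩
  · rintro ⟨w, ⟨l, hl, hlen, rfl⟩, rfl⟩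
    obtain ⟨p, hp⟩ := exists_walk_of_word (x := x) l hl
    exact ⟨⟨p⟩, (SimpleGraph.dist_le p).trans (hp.trans hlen)⟩

end Ball

section Iso
variable {Γ : Type*} [Group Γ] {Q : Finset Γ} {H H' : Subgroup Γ}

/-- If the stabilizers of `x` and `z` agree on the word ball of radius `2R+1`, then the
rooted `R`-balls at `x` and `z` are isomorphic. -/
lemma ballIso_of_agree (hsym : ∀ s ∈ Q, s⁻¹ ∈ Q) {R : ℕ} {x : Γ ⧸ H} {z : Γ ⧸ H'}
    (hag : ∀ w ∈ WB Q (2 * R + 1), (w • x = x ↔ w • z = z)) :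
    BallIso Q H H' R x z := by
  classical
  -- the core transfer principle
  have key : ∀ {m n : ℕ}, m + n ≤ 2 * R + 1 → ∀ w ∈ WB Q m, ∀ w' ∈ WB Q n,
      (w • x = w' • x ↔ w • z = w' • z) := by
    intro m n hmn w hw w' hw'
    have h1 : (w'⁻¹ * w) • x = x ↔ (w'⁻¹ * w) • z = z :=
      hag _ (WB_mono (show n + m ≤ 2 * R + 1 by omega)
        (mul_mem_WB (inv_mem_WB hsym hw') hw))
    constructor
    · intro h
      have h2 : (w'⁻¹ * w) • x = x := by rw [mul_smul, h, inv_smul_smul]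
      have h3 := h1.mp h2
      rw [mul_smul] at h3
      rwa [inv_smul_eq_iff] at h3
    · intro h
      have h2 : (w'⁻¹ * w) • z = z := by rw [mul_smul, h, inv_smul_smul]
      have h3 := h1.mpr h2
      rw [mul_smul] at h3
      rwa [inv_smul_eq_iff] at h3
  choose wit hwit using fun u (h : ∃ w ∈ WB Q R, w • x = u) => h
  set φ : (Γ ⧸ H) → (Γ ⧸ H') := fun u =>
    if h : ∃ w ∈ WB Q R, w • x = u then wit u h • z else z with hφ
  have hφball : ∀ u ∈ sBall Q H R x, ∃ w, w ∈ WB Q R ∧ w • x = u ∧ φ u = w • z := by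
    intro u hu
    have h := (mem_sBall_iff hsym).mp hu
    exact ⟨wit u h, (hwit u h).1, (hwit u h).2, by simp only [hφ, dif_pos h]⟩
  refine ⟨φ, ⟨?_, ?_, ?_⟩, ?_, ?_⟩
  · -- maps to
    intro u hu
    obtain ⟨w, h1, h2, h3⟩ := hφball u hu
    rw [h3, mem_sBall_iff hsym]
    exact ⟨_, h1, rfl⟩
  · -- inj on
    intro u hu v hv he
    obtain ⟨wu, hu1, hu2, hu3⟩ := hφball u hu
    obtain ⟨wv, hv1, hv2, hv3⟩ := hφball v hv
    rw [hu3, hv3] at he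
    have h4 := (key (m := R) (n := R) (by omega) _ hu1 _ hv1).mpr he
    rw [hu2, hv2] at h4
    exact h4
  · -- surj on
    intro v hv
    obtain ⟨w, hw, rfl⟩ := (mem_sBall_iff hsym).mp hv
    have hux : w • x ∈ sBall Q H R x := (mem_sBall_iff hsym).mpr ⟨w, hw, rfl⟩
    obtain ⟨wu, h1, h2, h3⟩ := hφball _ hux
    refine ⟨w • x, hux, ?_⟩
    rw [h3]
    exact (key (m := R) (n := R) (by omega) _ h1 _ hw).mp h2
  · -- root
    have hx : x ∈ sBall Q H R x := (mem_sBall_iff hsym).mpr ⟨1, one_mem_WB R, one_smul _ _⟩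
    obtain ⟨w, h1, h2, h3⟩ := hφball x hx
    rw [h3]
    exact (hag _ (WB_mono (show R ≤ 2 * R + 1 by omega) h1)).mp h2
  · -- edges
    intro s hs u hu v hv
    obtain ⟨wu, hu1, hu2, hu3⟩ := hφball u hu
    obtain ⟨wv, hv1, hv2, hv3⟩ := hφball v hv
    rw [hu3, hv3, ← hu2, ← hv2, ← mul_smul, ← mul_smul]
    exact key (show 1 + R + R ≤ 2 * R + 1 by omega) _
      (mul_mem_WB (mem_WB_of_mem hs le_rfl) hu1) _ hv1

/-- Conversely, a rooted `R`-ball isomorphism forces the stabilizers to agree on the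
word ball of radius `R`. -/
lemma agree_of_ballIso (hsym : ∀ s ∈ Q, s⁻¹ ∈ Q) {R : ℕ} {x : Γ ⧸ H} {z : Γ ⧸ H'}
    (h : BallIso Q H H' R x z) :
    ∀ w ∈ WB Q R, (w • x = x ↔ w • z = z) := by
  obtain ⟨φ, ⟨hmaps, hinj, hsurj⟩, hroot, hedge⟩ := h
  have hx : x ∈ sBall Q H R x := (mem_sBall_iff hsym).mpr ⟨1, one_mem_WB R, one_smul _ _⟩
  have claim : ∀ l : List Γ, (∀ s ∈ l, s ∈ Q) → l.length ≤ R →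
      l.prod • x ∈ sBall Q H R x ∧ φ (l.prod • x) = l.prod • z := by
    intro l
    induction l with
    | nil =>
      intro _ _
      rw [List.prod_nil, one_smul, one_smul]
      exact ⟨hx, hroot⟩
    | cons s t ih =>
      intro hl hlen
      obtain ⟨htball, htφ⟩ := ih (fun a ha => hl a (List.mem_cons_of_mem s ha))
        (le_trans (by simp) hlen)
      have hvball : (s :: t).prod • x ∈ sBall Q H R x := by
        refine (mem_sBall_iff hsym).mpr ⟨(s :: t).prod, ⟨s :: t, hl, hlen, rfl⟩, rfl⟩
      have hse : s • (t.prod • x) = (s :: t).prod • x := by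
        rw [List.prod_cons, mul_smul]
      have := (hedge s (hl s (by simp)) _ htball _ hvball).mp hse
      rw [htφ] at this
      refine ⟨hvball, ?_⟩
      rw [← this, List.prod_cons, mul_smul]
  rintro w ⟨l, hl, hlen, rfl⟩
  obtain ⟨hball, hφw⟩ := claim l hl hlen
  constructor
  · intro h
    rw [h, hroot] at hφw
    exact hφw.symm
  · intro h
    rw [h, ← hroot] at hφw
    exact hinj hball hx hφw
end Iso

section Topo
variable {Γ : Type*} [Group Γ]

/-- The embedding of `Sub(Γ)` into `{0,1}^Γ`. -/
noncomputable def chEmb : Subgroup Γ → (Γ → Bool) :=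
  fun H (g : Γ) => @decide (g ∈ H) (Classical.dec _)

lemma chEmb_apply_eq_true {K : Subgroup Γ} {g : Γ} : chEmb K g = true ↔ g ∈ K := by
  simp [chEmb]

lemma continuous_chEmb : Continuous (chEmb (Γ := Γ)) := continuous_induced_dom

lemma chEmb_injective : Function.Injective (chEmb (Γ := Γ)) := by
  intro K L h
  ext g
  rw [← chEmb_apply_eq_true, ← chEmb_apply_eq_true, h]

lemma isOpen_agree (L : Subgroup Γ) (W : Set Γ) (hW : W.Finite) :
    IsOpen {K : Subgroup Γ | ∀ w ∈ W, (w ∈ K ↔ w ∈ L)} := by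
  have : {K : Subgroup Γ | ∀ w ∈ W, (w ∈ K ↔ w ∈ L)} =
      ⋂ w ∈ W, (fun K => chEmb K w) ⁻¹' {chEmb L w} := by
    ext K
    simp only [Set.mem_setOf_eq, Set.mem_iInter, Set.mem_preimage, Set.mem_singleton_iff]
    refine forall₂_congr fun w _ => ?_
    rw [← decide_eq_decide (p := w ∈ K) (q := w ∈ L)]
    rfl
  rw [this]
  refine hW.isOpen_biInter fun w _ => ?_
  exact (IsOpen.preimage ((continuous_apply w).comp continuous_chEmb)) (isOpen_discrete _)

lemma mem_closure_iff_agree {O : Set (Subgroup Γ)} {L : Subgroup Γ} :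
    L ∈ closure O ↔ ∀ W : Finset Γ, ∃ K ∈ O, ∀ w ∈ W, (w ∈ K ↔ w ∈ L) := by
  constructor
  · intro h W
    have hU := isOpen_agree L (W : Set Γ) W.finite_toSet
    have hLU : L ∈ {K : Subgroup Γ | ∀ w ∈ (W : Set Γ), (w ∈ K ↔ w ∈ L)} := by
      intro w _; rfl
    obtain ⟨K, hK1, hK2⟩ := _root_.mem_closure_iff.mp h _ hU hLU
    exact ⟨K, hK2, fun w hw => hK1 w hw⟩
  · intro h
    rw [_root_.mem_closure_iff]
    intro U hU hLU
    obtain ⟨V, hV, rfl⟩ := isOpen_induced_iff.mp hU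
    obtain ⟨I, u, hu, hpi⟩ := isOpen_pi_iff.mp hV _ hLU
    obtain ⟨K, hKO, hK⟩ := h I
    refine ⟨K, hpi fun w hw => ?_, hKO⟩
    have h2 : chEmb K w = chEmb L w := decide_eq_decide.mpr (hK w hw)
    show chEmb K w ∈ u w
    rw [h2]
    exact (hu w hw).2

lemma isClosed_range_chEmb : IsClosed (Set.range (chEmb (Γ := Γ))) := by
  have : Set.range (chEmb (Γ := Γ)) =
      {f : Γ → Bool | f 1 = true} ∩
      (⋂ a : Γ, ⋂ b : Γ, {f : Γ → Bool | f a = true ∧ f b = true → f (a * b) = true}) ∩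
      (⋂ a : Γ, {f : Γ → Bool | f a = true → f a⁻¹ = true}) := by
    ext f
    constructor
    · rintro ⟨K, rfl⟩
      refine ⟨⟨chEmb_apply_eq_true.mpr K.one_mem, ?_⟩, ?_⟩
      · simp only [Set.mem_iInter, Set.mem_setOf_eq]
        intro a b hab
        exact chEmb_apply_eq_true.mpr
          (K.mul_mem (chEmb_apply_eq_true.mp hab.1) (chEmb_apply_eq_true.mp hab.2))
      · simp only [Set.mem_iInter, Set.mem_setOf_eq]
        intro a ha
        exact chEmb_apply_eq_true.mpr (K.inv_mem (chEmb_apply_eq_true.mp ha))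
    · rintro ⟨⟨h1, hmul⟩, hinv⟩
      simp only [Set.mem_iInter, Set.mem_setOf_eq] at hmul hinv
      refine ⟨{ carrier := {g | f g = true}
                one_mem' := h1
                mul_mem' := fun {a b} ha hb => hmul a b ⟨ha, hb⟩
                inv_mem' := fun {a} ha => hinv a ha }, ?_⟩
      funext g
      cases h : f g with
      | true => exact chEmb_apply_eq_true.mpr (show f g = true from h)
      | false =>
        refine Bool.eq_false_iff.mpr fun hc => ?_
        have hm : f g = true := chEmb_apply_eq_true.mp hc
        rw [hm] at h
        exact Bool.noConfusion h
  rw [this]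
  have hC : ∀ a : Γ, IsClosed {f : Γ → Bool | f a = true} := by
    intro a
    have he : {f : Γ → Bool | f a = true} = (fun f : Γ → Bool => f a) ⁻¹' {true} := rfl
    rw [he]
    exact (IsClosed.preimage (continuous_apply a)) (isClosed_discrete _)
  have hCo : ∀ a : Γ, IsOpen {f : Γ → Bool | f a = true} := by
    intro a
    have he : {f : Γ → Bool | f a = true} = (fun f : Γ → Bool => f a) ⁻¹' {true} := rfl
    rw [he]
    exact (IsOpen.preimage (continuous_apply a)) (isOpen_discrete _)
  refine IsClosed.inter (IsClosed.inter (hC 1) ?_) ?_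
  · refine isClosed_iInter fun a => isClosed_iInter fun b => ?_
    have : {f : Γ → Bool | f a = true ∧ f b = true → f (a * b) = true} =
        ({f : Γ → Bool | f a = true} ∩ {f : Γ → Bool | f b = true})ᶜ ∪
          {f : Γ → Bool | f (a * b) = true} := by
      ext f
      by_cases h1 : f a = true <;> by_cases h2 : f b = true <;>
        simp [h1, h2]
    rw [this]
    exact IsClosed.union (isClosed_compl_iff.mpr ((hCo a).inter (hCo b))) (hC _)
  · refine isClosed_iInter fun a => ?_
    have : {f : Γ → Bool | f a = true → f a⁻¹ = true} =
        {f : Γ → Bool | f a = true}ᶜ ∪ {f : Γ → Bool | f a⁻¹ = true} := by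
      ext f
      by_cases h1 : f a = true <;> simp [h1]
    rw [this]
    exact IsClosed.union (isClosed_compl_iff.mpr (hCo a)) (hC _)

lemma embedding_chEmb : Topology.IsEmbedding (chEmb (Γ := Γ)) :=
  ⟨⟨rfl⟩, chEmb_injective⟩

lemma isCompact_univ_subgroups : IsCompact (Set.univ : Set (Subgroup Γ)) := by
  rw [embedding_chEmb.isCompact_iff]
  rw [Set.image_univ]
  exact isClosed_range_chEmb.isCompact

lemma continuous_conjSub (g : Γ) : Continuous (conjSub (Γ := Γ) g) := by
  rw [show (chabauty : TopologicalSpace (Subgroup Γ)) =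
    TopologicalSpace.induced chEmb inferInstance from rfl, continuous_induced_rng]
  have : chEmb ∘ conjSub g = (fun f (w : Γ) => f (g⁻¹ * w * g)) ∘ chEmb (Γ := Γ) := by
    funext K w
    simp only [Function.comp_apply]
    exact decide_eq_decide.mpr mem_conjSub
  rw [this]
  exact (continuous_pi fun w => continuous_apply _).comp continuous_chEmb

end Topo
/-- (a) every member of a URS has the repetition property; (b) conversely, if
a subgroup has the repetition property, then the closure of its conjugation orbit is a URS. -/
theorem urs_iff_repetition
    {Γ : Type*} [Group Γ] (Q : Finset Γ)
    (hgen : Subgroup.closure (Q : Set Γ) = ⊤)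
    (hsym : ∀ s ∈ Q, s⁻¹ ∈ Q) :
    (∀ Z : Set (Subgroup Γ), IsURS Z → ∀ H ∈ Z, RepetitionProperty Q H) ∧
    (∀ H : Subgroup Γ, RepetitionProperty Q H →
      IsURS (closure {K : Subgroup Γ | ∃ g : Γ, conjSub g H = K})) := by
  constructor
  · -- (a)
    intro Z hZ H hH x R hR
    obtain ⟨a, rfl⟩ := QuotientGroup.mk_surjective x
    set N := conjSub a H with hN
    have hNZ : N ∈ Z := hZ.invariant a H hH
    set U := {K : Subgroup Γ | ∀ w ∈ WB Q (2 * R + 1), (w ∈ K ↔ w ∈ N)} with hU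
    have hUopen : IsOpen U := isOpen_agree N _ (WB_finite _)
    have hNU : N ∈ U := fun w _ => Iff.rfl
    have hcover : Z ⊆ ⋃ g : Γ, (conjSub g) ⁻¹' U := by
      intro K hK
      have hmin := hZ.minimal K hK N hNZ
      obtain ⟨L, hLU, g, rfl⟩ := _root_.mem_closure_iff.mp hmin U hUopen hNU
      exact Set.mem_iUnion.mpr ⟨g, hLU⟩
    have hZcomp : IsCompact Z :=
      isCompact_univ_subgroups.of_isClosed_subset hZ.closed (Set.subset_univ _)
    obtain ⟨F, hF⟩ := hZcomp.elim_finite_subcover _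
      (fun g : Γ => (hUopen.preimage (continuous_conjSub g))) hcover
    choose len hlen using fun g : Γ => exists_word (Q := Q) hgen hsym g
    refine ⟨F.sup len + 1, Nat.succ_pos _, ?_⟩
    intro y
    obtain ⟨c, rfl⟩ := QuotientGroup.mk_surjective y
    have hKy : conjSub c H ∈ Z := hZ.invariant c H hH
    obtain ⟨g, hgF, hgU⟩ := Set.mem_iUnion₂.mp (hF hKy)
    refine ⟨g • (QuotientGroup.mk c), ?_, ?_⟩
    · rw [mem_sBall_iff hsym]
      exact ⟨g, WB_mono ((Finset.le_sup hgF).trans (Nat.le_succ _)) (hlen g), rfl⟩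
    · refine ballIso_of_agree hsym fun w hw => ?_
      have h1 : w • (QuotientGroup.mk a : Γ ⧸ H) = QuotientGroup.mk a ↔ w ∈ N := by
        rw [smul_eq_iff_mem_stabilizer, stabilizer_mk]
      have h2 : w • (g • (QuotientGroup.mk c : Γ ⧸ H)) = g • QuotientGroup.mk c ↔
          w ∈ conjSub g (conjSub c H) := by
        rw [smul_eq_iff_mem_stabilizer, stabilizer_smul, stabilizer_mk]
      rw [h1, h2]
      exact (hgU w hw).symm
  · -- (b)
    intro H hrep
    set O := {K : Subgroup Γ | ∃ g : Γ, conjSub g H = K} with hO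
    have hHO : H ∈ O := ⟨1, conjSub_one H⟩
    have hOinv : ∀ g : Γ, ∀ K ∈ O, conjSub g K ∈ O := by
      rintro g K ⟨h, rfl⟩
      exact ⟨g * h, (conjSub_conjSub g h H).symm⟩
    refine ⟨⟨H, subset_closure hHO⟩, isClosed_closure, ?_, ?_⟩
    · intro g K hK
      have h1 : conjSub g K ∈ (conjSub g) '' (closure O) := ⟨K, hK, rfl⟩
      have h2 : conjSub g '' O ⊆ O := by
        rintro _ ⟨K', hK', rfl⟩
        exact hOinv g K' hK'
      exact closure_mono h2 (image_closure_subset_closure_image (continuous_conjSub g) h1)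
    · intro K hK L hL
      rw [mem_closure_iff_agree]
      intro W
      choose len hlen using fun g : Γ => exists_word (Q := Q) hgen hsym g
      set R := W.sup len with hR
      have hWsub : ∀ w ∈ W, w ∈ WB Q R := fun w hw => WB_mono (Finset.le_sup hw) (hlen w)
      obtain ⟨K₁, ⟨a, rfl⟩, hLag⟩ :=
        mem_closure_iff_agree.mp hL ((WB_finite (Q := Q) (2 * R + 1)).toFinset)
      obtain ⟨S, hSpos, hP⟩ := hrep (QuotientGroup.mk a) (2 * R + 1) (by omega)
      obtain ⟨K₂, ⟨c, rfl⟩, hKag⟩ :=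
        mem_closure_iff_agree.mp hK ((WB_finite (Q := Q) (2 * S + R)).toFinset)
      obtain ⟨z, hzball, hiso⟩ := hP (QuotientGroup.mk c)
      obtain ⟨v, hv, rfl⟩ := (mem_sBall_iff hsym).mp hzball
      refine ⟨conjSub v K, ⟨v, rfl⟩, ?_⟩
      intro w hwW
      have hwR : w ∈ WB Q R := hWsub w hwW
      have hagree := agree_of_ballIso hsym hiso
      have hmemM : v⁻¹ * w * v ∈ WB Q (2 * S + R) := by
        have h := mul_mem_WB (mul_mem_WB (inv_mem_WB hsym hv) hwR) hv
        exact WB_mono (by omega) h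
      have e1 : w ∈ conjSub v K ↔ v⁻¹ * w * v ∈ K := mem_conjSub
      have e2 : v⁻¹ * w * v ∈ K ↔ v⁻¹ * w * v ∈ conjSub c H :=
        (hKag _ ((WB_finite _).mem_toFinset.mpr hmemM)).symm
      have e3 : v⁻¹ * w * v ∈ conjSub c H ↔
          (v⁻¹ * w * v) • (QuotientGroup.mk c : Γ ⧸ H) = QuotientGroup.mk c := by
        rw [smul_eq_iff_mem_stabilizer, stabilizer_mk]
      have e4 : (v⁻¹ * w * v) • (QuotientGroup.mk c : Γ ⧸ H) = QuotientGroup.mk c ↔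
          w • (v • (QuotientGroup.mk c : Γ ⧸ H)) = v • QuotientGroup.mk c := by
        have hc : w • (v • (QuotientGroup.mk c : Γ ⧸ H)) =
            v • ((v⁻¹ * w * v) • QuotientGroup.mk c) := by
          rw [← mul_smul, ← mul_smul]
          congr 1
          group
        rw [hc, smul_left_cancel_iff]
      have e5 : w • (v • (QuotientGroup.mk c : Γ ⧸ H)) = v • QuotientGroup.mk c ↔
          w • (QuotientGroup.mk a : Γ ⧸ H) = QuotientGroup.mk a :=
        (hagree w (WB_mono (by omega) hwR)).symm
      have e6 : w • (QuotientGroup.mk a : Γ ⧸ H) = QuotientGroup.mk a ↔ w ∈ conjSub a H := by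
        rw [smul_eq_iff_mem_stabilizer, stabilizer_mk]
      have e7 : w ∈ conjSub a H ↔ w ∈ L :=
        hLag w ((WB_finite _).mem_toFinset.mpr (WB_mono (by omega) hwR))
      rw [e1, e2, e3, e4, e5, e6]
      exact e7
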